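/- Let X have CDF (1 − e^{−t})^M for t ≥ 0 and let G be an independent unit-rate exponential. For αs > 0, P0 > 0, α0 > 0: P(X < αs(P0·G + 1) and G < α0) = Σ_{i=0}^{M} C(M,i)(−1)^i e^{−i·αs} · (1 − e^{−(1 + i·αs·P0)·α0})/(1 + i·αs·P0). -/

import Mathlib

open MeasureTheory ProbabilityTheory Set Real Filter Topology

-- Lemma 1: measure of Iio from continuous CDF on [0,∞)
lemma meas_Iio_of_cdf (μ : Measure ℝ) [IsFiniteMeasure μ] (F : ℝ → ℝ) (hF : Continuous F)
    (h : ∀ t, 0 ≤ t → μ (Iic t) = ENNReal.ofReal (F t)) {c : ℝ} (hc : 0 < c) :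
    μ (Iio c) = ENNReal.ofReal (F c) := by
  set u : ℕ → ℝ := fun n => c - c / (n + 1) with hu
  have hu0 : ∀ n : ℕ, 0 ≤ u n := by
    intro n
    have : c / (n + 1) ≤ c / 1 := by
      apply div_le_div_of_nonneg_left hc.le one_pos
      exact_mod_cast Nat.succ_le_succ (Nat.zero_le n)
    simp only [hu, div_one] at this ⊢
    linarith
  have hmono : Monotone fun n : ℕ => Iic (u n) := by
    intro m n hmn
    apply Iic_subset_Iic.2
    have : c / (n + 1) ≤ c / (m + 1) := by
      apply div_le_div_of_nonneg_left hc.le (by positivity)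
      exact_mod_cast Nat.succ_le_succ hmn
    simp only [hu]; linarith
  have hunion : (⋃ n, Iic (u n)) = Iio c := by
    ext x
    simp only [mem_iUnion, mem_Iic, mem_Iio]
    constructor
    · rintro ⟨n, hn⟩
      have : 0 < c / (n + 1) := by positivity
      simp only [hu] at hn; linarith
    · intro hx
      obtain ⟨n, hn⟩ := exists_nat_ge (c / (c - x))
      refine ⟨n, ?_⟩
      have hcx : 0 < c - x := by linarith
      have : c ≤ n * (c - x) := by
        have := (div_le_iff₀ hcx).mp hn
        linarith
      have hle : c / (n + 1) ≤ c - x := by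
        rw [div_le_iff₀ (by positivity)]
        nlinarith [hcx.le]
      simp only [hu]; linarith
  have h1 : Tendsto (fun n => μ (Iic (u n))) atTop (𝓝 (μ (Iio c))) := by
    have := tendsto_measure_iUnion_atTop (μ := μ) hmono
    rwa [hunion] at this
  have h2 : Tendsto (fun n => μ (Iic (u n))) atTop (𝓝 (ENNReal.ofReal (F c))) := by
    have hN : Tendsto u atTop (𝓝 c) := by
      have h3 : Tendsto (fun n : ℕ => c / (n + 1)) atTop (𝓝 0) := by
        apply Tendsto.div_atTop tendsto_const_nhds
        exact tendsto_atTop_add_const_right atTop 1 tendsto_natCast_atTop_atTop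
      have := tendsto_const_nhds (x := c) (f := atTop (α := ℕ)).sub h3
      simpa using this
    have := ((ENNReal.continuous_ofReal.comp hF).continuousAt (x := c)).tendsto.comp hN
    refine this.congr fun n => ?_
    exact (h (u n) (hu0 n)).symm
  exact tendsto_nhds_unique h1 h2

-- Lemma 2: exponential interval integral
lemma int_exp_aux (k b : ℝ) (hk : k ≠ 0) :
    ∫ x in (0:ℝ)..b, Real.exp (-(k * x)) = (1 - Real.exp (-(k * b))) / k := by
  have hder : ∀ x ∈ Set.uIcc (0:ℝ) b,
      HasDerivAt (fun x => -Real.exp (-(k * x)) / k) (Real.exp (-(k * x))) x := by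
    intro x _
    have h1 : HasDerivAt (fun x : ℝ => -(k * x)) (-k) x := by
      have h0 := ((hasDerivAt_id x).const_mul k).neg
      simp only [mul_one, id] at h0
      exact h0
    have h2 := h1.exp
    have h3 := (h2.neg).div_const k
    convert h3 using 1
    · rfl
    · rfl
    · rfl
    · field_simp
  have hcont : IntervalIntegrable (fun x => Real.exp (-(k * x))) volume 0 b := by
    apply Continuous.intervalIntegrable
    continuity
  rw [intervalIntegral.integral_eq_sub_of_hasDerivAt hder hcont]
  simp [Real.exp_zero]
  ring

noncomputable def expDens : ℝ → ENNReal :=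
  fun x => Set.indicator (Set.Ici (0:ℝ)) (fun x => ENNReal.ofReal (Real.exp (-x))) x

lemma expDens_meas : Measurable expDens :=
  Measurable.indicator (ENNReal.measurable_ofReal.comp (continuous_exp.comp continuous_neg).measurable) measurableSet_Ici


lemma expMeas_Iic (t : ℝ) (ht : 0 ≤ t) :
    (volume.withDensity expDens) (Iic t) = ENNReal.ofReal (1 - Real.exp (-t)) := by
  rw [withDensity_apply _ measurableSet_Iic]
  unfold expDens
  rw [lintegral_indicator measurableSet_Ici, Measure.restrict_restrict measurableSet_Ici,
    Set.Ici_inter_Iic]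
  rw [← ofReal_integral_eq_lintegral_ofReal]
  · rw [integral_Icc_eq_integral_Ioc, ← intervalIntegral.integral_of_le ht]
    have := int_exp_aux 1 t one_ne_zero
    simp only [one_mul, div_one] at this
    rw [this]
  · exact (continuous_exp.comp continuous_neg).integrableOn_Icc.mono_set (by rfl)
  · exact ae_of_all _ fun x => (Real.exp_pos _).le

lemma expMeas_Iic_neg (t : ℝ) (ht : t < 0) :
    (volume.withDensity expDens) (Iic t) = 0 := by
  rw [withDensity_apply _ measurableSet_Iic]
  rw [setLIntegral_congr_fun measurableSet_Iic
    (fun x (hx : x ∈ Iic t) => show expDens x = 0 by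
      unfold expDens
      rw [Set.indicator_of_notMem]
      simp only [mem_Ici, not_le]
      exact lt_of_le_of_lt hx ht)]
  simp

lemma key_integral (M : ℕ) (αs P0 α0 : ℝ) (hαs : 0 < αs) (hP0 : 0 < P0) :
    ∫ g in (0:ℝ)..α0, (1 - Real.exp (-(αs * (P0 * g + 1)))) ^ M * Real.exp (-g)
      = ∑ i ∈ Finset.range (M + 1),
          (M.choose i : ℝ) * (-1) ^ i * Real.exp (-(i * αs)) *
            ((1 - Real.exp (-((1 + i * αs * P0) * α0))) / (1 + i * αs * P0)) := by
  have hk : ∀ i : ℕ, (0:ℝ) < 1 + i * αs * P0 := fun i => by positivity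
  have expand : ∀ g : ℝ, (1 - Real.exp (-(αs * (P0 * g + 1)))) ^ M * Real.exp (-g)
      = ∑ i ∈ Finset.range (M + 1),
          (M.choose i : ℝ) * (-1) ^ i * Real.exp (-(i * αs)) *
            Real.exp (-((1 + i * αs * P0) * g)) := by
    intro g
    have h1 : (1 - Real.exp (-(αs * (P0 * g + 1)))) ^ M
        = ∑ i ∈ Finset.range (M + 1),
            (-Real.exp (-(αs * (P0 * g + 1)))) ^ i * 1 ^ (M - i) * (M.choose i : ℝ) := by
      rw [← add_pow]; ring_nf
    rw [h1, Finset.sum_mul]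
    refine Finset.sum_congr rfl fun i _ => ?_
    rw [neg_pow, ← Real.exp_nat_mul]
    have e1 : Real.exp (↑i * -(αs * (P0 * g + 1))) * Real.exp (-g)
        = Real.exp (-(↑i * αs)) * Real.exp (-((1 + ↑i * αs * P0) * g)) := by
      rw [← Real.exp_add, ← Real.exp_add]; ring_nf
    simp only [one_pow, mul_one]
    linear_combination ((-1:ℝ) ^ i * (M.choose i : ℝ)) * e1
  rw [intervalIntegral.integral_congr (fun g _ => expand g),
    intervalIntegral.integral_finset_sum]
  · refine Finset.sum_congr rfl fun i _ => ?_
    have : ∀ g : ℝ, (M.choose i : ℝ) * (-1) ^ i * Real.exp (-(i * αs)) *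
        Real.exp (-((1 + i * αs * P0) * g))
        = (M.choose i : ℝ) * (-1) ^ i * Real.exp (-(i * αs)) *
          Real.exp (-((1 + i * αs * P0) * g)) := fun _ => rfl
    rw [intervalIntegral.integral_const_mul, int_exp_aux _ _ (hk i).ne']
  · intro i _
    apply Continuous.intervalIntegrable
    continuity

theorem stmt_10 {Ω : Type*} [MeasureSpace Ω] [IsProbabilityMeasure (ℙ : Measure Ω)]
    (M : ℕ) (X G : Ω → ℝ) (hmX : Measurable X) (hmG : Measurable G)
    (hX : ∀ t : ℝ, 0 ≤ t → ℙ {ω | X ω ≤ t} = ENNReal.ofReal ((1 - Real.exp (-t)) ^ M))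
    (hG : ∀ t : ℝ, 0 ≤ t → ℙ {ω | G ω ≤ t} = ENNReal.ofReal (1 - Real.exp (-t)))
    (hindep : IndepFun X G ℙ) (αs P0 α0 : ℝ) (hαs : 0 < αs) (hP0 : 0 < P0) (hα0 : 0 < α0) :
    ℙ {ω | X ω < αs * (P0 * G ω + 1) ∧ G ω < α0}
      = ENNReal.ofReal (∑ i ∈ Finset.range (M + 1),
          (M.choose i : ℝ) * (-1) ^ i * Real.exp (-(i * αs)) *
            ((1 - Real.exp (-((1 + i * αs * P0) * α0))) / (1 + i * αs * P0))) := by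
  set μX := Measure.map X ℙ with hμXdef
  set μG := Measure.map G ℙ with hμGdef
  have instpX : IsProbabilityMeasure μX := Measure.isProbabilityMeasure_map hmX.aemeasurable
  have instpG : IsProbabilityMeasure μG := Measure.isProbabilityMeasure_map hmG.aemeasurable
  have hμX_Iic : ∀ t, 0 ≤ t → μX (Iic t) = ENNReal.ofReal ((1 - Real.exp (-t)) ^ M) := by
    intro t ht
    rw [hμXdef, Measure.map_apply hmX measurableSet_Iic]
    exact hX t ht
  have hμX_Iio : ∀ c : ℝ, 0 < c → μX (Iio c) = ENNReal.ofReal ((1 - Real.exp (-c)) ^ M) :=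
    fun c hc => meas_Iio_of_cdf μX _ (by continuity) hμX_Iic hc
  have hμG : μG = volume.withDensity expDens := by
    apply MeasureTheory.Measure.ext_of_Iic
    intro a
    rcases le_or_gt 0 a with ha | ha
    · rw [hμGdef, Measure.map_apply hmG measurableSet_Iic, expMeas_Iic a ha]
      exact hG a ha
    · rw [expMeas_Iic_neg a ha, hμGdef, Measure.map_apply hmG measurableSet_Iic]
      have h0 : ℙ {ω | G ω ≤ 0} = 0 := by simpa using hG 0 le_rfl
      refine le_antisymm ?_ (zero_le (a := _))
      rw [← h0]
      apply measure_mono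
      intro ω hω
      exact le_trans hω ha.le
  set S : Set (ℝ × ℝ) := {p | p.2 < αs * (P0 * p.1 + 1) ∧ p.1 < α0} with hSdef
  have hSopen : IsOpen S := by
    apply IsOpen.inter
    · exact isOpen_lt continuous_snd (by continuity)
    · exact isOpen_lt continuous_fst continuous_const
  have hSm := hSopen.measurableSet
  have hmap : Measure.map (fun ω => (G ω, X ω)) ℙ = μG.prod μX :=
    (indepFun_iff_map_prod_eq_prod_map_map hmG.aemeasurable hmX.aemeasurable).mp hindep.symm
  have hev : {ω | X ω < αs * (P0 * G ω + 1) ∧ G ω < α0} = (fun ω => (G ω, X ω)) ⁻¹' S := rfl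
  rw [hev, ← Measure.map_apply (hmG.prodMk hmX) hSm, hmap, Measure.prod_apply hSm]
  have hsec : ∀ g : ℝ, μX (Prod.mk g ⁻¹' S)
      = Set.indicator (Iio α0) (fun g => μX (Iio (αs * (P0 * g + 1)))) g := by
    intro g
    by_cases hg : g < α0
    · rw [Set.indicator_of_mem (mem_Iio.2 hg)]
      congr 1
      ext x
      simp [hSdef, hg]
    · rw [Set.indicator_of_notMem (by simpa using hg)]
      convert measure_empty (μ := μX)
      ext x
      simp [hSdef, hg]
  have hmono : Monotone (fun g : ℝ => μX (Iio (αs * (P0 * g + 1)))) := by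
    intro a b hab
    apply measure_mono
    apply Iio_subset_Iio
    gcongr
  have hmeasInd : Measurable (Set.indicator (Iio α0)
      (fun g : ℝ => μX (Iio (αs * (P0 * g + 1))))) :=
    hmono.measurable.indicator measurableSet_Iio
  simp_rw [hsec]
  rw [hμG, lintegral_withDensity_eq_lintegral_mul _ expDens_meas hmeasInd]
  have hfun : ∀ g : ℝ, (expDens * Set.indicator (Iio α0)
        (fun g => μX (Iio (αs * (P0 * g + 1))))) g
      = Set.indicator (Ico 0 α0)
          (fun g => ENNReal.ofReal
            ((1 - Real.exp (-(αs * (P0 * g + 1)))) ^ M * Real.exp (-g))) g := by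
    intro g
    simp only [Pi.mul_apply]
    rcases lt_or_ge g 0 with hg0 | hg0
    · rw [show expDens g = 0 from Set.indicator_of_notMem (by simpa using hg0) _,
        zero_mul, Set.indicator_of_notMem (fun h => absurd h.1 (not_le.2 hg0))]
    · rcases lt_or_ge g α0 with hg1 | hg1
      · rw [Set.indicator_of_mem (mem_Ico.2 ⟨hg0, hg1⟩),
          show expDens g = ENNReal.ofReal (Real.exp (-g)) from
            Set.indicator_of_mem (mem_Ici.2 hg0) _,
          Set.indicator_of_mem (mem_Iio.2 hg1),
          hμX_Iio _ (by have := mul_nonneg hP0.le hg0; nlinarith), ← ENNReal.ofReal_mul (Real.exp_pos _).le,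
          mul_comm (Real.exp (-g))]
      · rw [Set.indicator_of_notMem (fun h : g ∈ Ico (0:ℝ) α0 => absurd h.2 (not_lt.2 hg1)),
          Set.indicator_of_notMem (by simpa using hg1), mul_zero]
  have hcont : Continuous fun g : ℝ =>
      (1 - Real.exp (-(αs * (P0 * g + 1)))) ^ M * Real.exp (-g) := by
    apply Continuous.mul
    · exact (continuous_const.sub (Real.continuous_exp.comp
        (continuous_const.mul (((continuous_const.mul continuous_id).add
          continuous_const))).neg)).pow M
    · exact Real.continuous_exp.comp continuous_neg
  rw [lintegral_congr hfun, lintegral_indicator measurableSet_Ico,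
    ← ofReal_integral_eq_lintegral_ofReal]
  · rw [setIntegral_congr_set (Ico_ae_eq_Ioc),
      ← intervalIntegral.integral_of_le hα0.le, key_integral M αs P0 α0 hαs hP0]
  · exact (hcont.integrableOn_Icc).mono_set Ico_subset_Icc_self
  · refine (ae_restrict_iff' measurableSet_Ico).2 (ae_of_all _ fun g hg => ?_)
    refine mul_nonneg (pow_nonneg ?_ M) (Real.exp_pos _).le
    have h1 : Real.exp (-(αs * (P0 * g + 1))) ≤ 1 := by
      rw [Real.exp_le_one_iff]
      have := mul_nonneg hP0.le hg.1
      nlinarith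
    linarith
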